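/- In the ball model of hyperbolic 3-space, the perpendicular bisector (in the hyperbolic sense) of the geodesic segment from the center O to A·O equals the isometric sphere of A^{-1}, for any isometry A of hyperbolic 3-space with A·O ≠ O. -/

import Mathlib

open Filter Set
open scoped Topology
open scoped ENNReal

noncomputable section

abbrev E3 := EuclideanSpace ℝ (Fin 3)

/-- The open unit ball: the Poincaré ball model of hyperbolic 3-space. -/
def ball3 : Set E3 := Metric.ball 0 1

/-- Hyperbolic distance in the Poincaré ball model. -/
def hDist (x y : E3) : ℝ :=
  2 * Real.arsinh (dist x y / Real.sqrt ((1 - ‖x‖ ^ 2) * (1 - ‖y‖ ^ 2)))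

/-- The hyperbolic geodesic segment between `x` and `y`: points of the ball lying
between them with respect to the hyperbolic metric. -/
def hSeg (x y : E3) : Set E3 :=
  {z | z ∈ ball3 ∧ hDist x z + hDist z y = hDist x y}

/-- A horoball in the ball model: a closed Euclidean ball internally tangent to the
unit sphere. -/
def Horoball (H : Set E3) : Prop :=
  ∃ c : E3, ∃ r : ℝ, 0 < r ∧ ‖c‖ = 1 - r ∧ H = Metric.closedBall c r

/-- A (complete) geodesic line in the ball model. -/
def IsGeodesicLine (L : Set E3) : Prop :=
  ∃ γ : ℝ → E3, (∀ t, γ t ∈ ball3) ∧ (∀ s t, hDist (γ s) (γ t) = |s - t|) ∧ L = Set.range γ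

/-- Hyperbolic distance from a point to a set. -/
def hDistToSet (x : E3) (L : Set E3) : ℝ := sInf ((hDist x) '' L)

/-- The equidistant tube of radius `R` about a geodesic line `L`. -/
def tube (L : Set E3) (R : ℝ) : Set E3 := {x ∈ ball3 | hDistToSet x L ≤ R}

/-- The boundary of the equidistant tube of radius `R` about `L`. -/
def tubeBoundary (L : Set E3) (R : ℝ) : Set E3 := {x ∈ ball3 | hDistToSet x L = R}

/-- A thin component: a horoball or an equidistant tube (of radius at least `R₀`). -/
def ThinR (R₀ : ℝ) (T : Set E3) : Prop :=
  Horoball T ∨ ∃ L R, IsGeodesicLine L ∧ R₀ ≤ R ∧ T = tube L R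

/-- Length of a path `γ` on `[a,b]`, measured with respect to a distance function `d`,
as the supremum of the `d`-lengths of inscribed polygonal approximations. -/
def pathELength {α : Type*} (d : α → α → ℝ) (γ : ℝ → α) (a b : ℝ) : ℝ≥0∞ :=
  ⨆ p : {q : ℕ × (ℕ → ℝ) // Monotone q.2 ∧ q.2 0 = a ∧ q.2 q.1 = b ∧
      ∀ i, q.2 i ∈ Set.Icc a b},
    ∑ i ∈ Finset.range p.1.1, ENNReal.ofReal (d (γ (p.1.2 i)) (γ (p.1.2 (i + 1))))

/-- The intrinsic (induced path) distance between `x` and `y` inside the set `S`,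
with respect to the distance function `d`. -/
def intrinsicDist {α : Type*} [TopologicalSpace α] (d : α → α → ℝ) (S : Set α)
    (x y : α) : ℝ≥0∞ :=
  ⨅ γ : {γ : ℝ → α // ContinuousOn γ (Set.Icc 0 1) ∧ γ 0 = x ∧ γ 1 = y ∧
      ∀ t ∈ Set.Icc (0 : ℝ) 1, γ t ∈ S},
    pathELength d γ.1 0 1

/-- A bijective self-map of the ball preserving the hyperbolic metric. -/
def IsHIsom (A : E3 → E3) : Prop :=
  Set.BijOn A ball3 ball3 ∧ ∀ x ∈ ball3, ∀ y ∈ ball3, hDist (A x) (A y) = hDist x y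

/-- An action of a group by hyperbolic isometries of the ball model. -/
def IsIsomAction {Γ : Type*} [Group Γ] (ρ : Γ → E3 → E3) : Prop :=
  (∀ g, IsHIsom (ρ g)) ∧ (∀ x, ρ 1 x = x) ∧ ∀ g h x, ρ (g * h) x = ρ g (ρ h x)

/-- Word length with respect to a (symmetrized) generating set `S`. -/
def wordLength {Γ : Type*} [Group Γ] (S : Set Γ) (g : Γ) : ℕ :=
  sInf {n | ∃ l : List Γ, l.length = n ∧ (∀ x ∈ l, x ∈ S ∨ x⁻¹ ∈ S) ∧ l.prod = g}

/-- The limit set: accumulation points on the sphere at infinity of the orbit of `O`. -/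
def limitSet {Γ : Type*} [Group Γ] (ρ : Γ → E3 → E3) (O : E3) : Set E3 :=
  {ξ | ‖ξ‖ = 1 ∧ ∃ u : ℕ → Γ, Tendsto (fun n => ρ (u n) O) atTop (nhds ξ)}

/-- Hyperbolic convexity. -/
def hConvex (C : Set E3) : Prop := ∀ x ∈ C, ∀ y ∈ C, hSeg x y ⊆ C

/-- The hyperbolic convex hull (in the ball) of a subset `Λ` of the sphere at infinity. -/
def limitHull (Λ : Set E3) : Set E3 :=
  (⋂₀ {C | C ⊆ ball3 ∧ hConvex C ∧ Λ ⊆ closure C}) ∩ ball3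

/-- Convex cocompactness: the orbit of `O` is cobounded in the convex hull of the
limit set (i.e. the quotient of the convex core is compact). -/
def ConvexCocompact {Γ : Type*} [Group Γ] (ρ : Γ → E3 → E3) (O : E3) : Prop :=
  ∃ D : ℝ, ∀ x ∈ limitHull (limitSet ρ O), ∃ g : Γ, hDist x (ρ g O) ≤ D

/-- `g` acts as a parabolic isometry: no fixed point in the ball, and zero
infimal displacement. -/
def IsParabolicIsom (A : E3 → E3) : Prop :=
  (∀ x ∈ ball3, A x ≠ x) ∧ sInf {d | ∃ x ∈ ball3, d = hDist x (A x)} = 0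

/-- Geometric finiteness, phrased via a Γ-invariant family of disjoint horoballs whose
complement in the convex core is cobounded for the orbit of `O`. -/
def GeomFiniteBall {Γ : Type*} [Group Γ] (ρ : Γ → E3 → E3) (O : E3) : Prop :=
  ∃ 𝓗 : Set (Set E3),
    (∀ H ∈ 𝓗, Horoball H) ∧
    (∀ H ∈ 𝓗, ∀ H' ∈ 𝓗, H ≠ H' → Disjoint H H') ∧
    (∀ g : Γ, ∀ H ∈ 𝓗, (ρ g) '' H ∈ 𝓗) ∧
    ∃ D : ℝ, ∀ x ∈ limitHull (limitSet ρ O) \ ⋃₀ 𝓗, ∃ g : Γ, hDist x (ρ g O) ≤ D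


lemma ball3_pos {x : E3} (hx : x ∈ ball3) : 0 < 1 - ‖x‖ ^ 2 := by
  rw [ball3, Metric.mem_ball, dist_zero_right] at hx
  nlinarith [norm_nonneg x]

lemma zero_mem_ball3 : (0 : E3) ∈ ball3 := by
  simp [ball3]

lemma isOpen_ball3 : IsOpen ball3 := Metric.isOpen_ball

lemma hDist_zero_eq (x : E3) :
    hDist x 0 = 2 * Real.arsinh (‖x‖ / Real.sqrt (1 - ‖x‖ ^ 2)) := by
  simp [hDist, dist_zero_right]

lemma norm_eq_of_hDist_zero {x y : E3} (hx : x ∈ ball3) (hy : y ∈ ball3)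
    (h : hDist x 0 = hDist y 0) : ‖x‖ = ‖y‖ := by
  rw [hDist_zero_eq, hDist_zero_eq] at h
  have h2 := Real.arsinh_injective (mul_left_cancel₀ (two_ne_zero (α := ℝ)) h)
  have px := ball3_pos hx; have py := ball3_pos hy
  have sx := Real.sqrt_pos.mpr px; have sy := Real.sqrt_pos.mpr py
  rw [div_eq_div_iff sx.ne' sy.ne'] at h2
  have h3 : ‖x‖ ^ 2 * (1 - ‖y‖ ^ 2) = ‖y‖ ^ 2 * (1 - ‖x‖ ^ 2) := by
    have := congrArg (· ^ 2) h2
    simpa [mul_pow, Real.sq_sqrt px.le, Real.sq_sqrt py.le] using this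
  have h4 : ‖x‖ ^ 2 = ‖y‖ ^ 2 := by nlinarith
  calc ‖x‖ = Real.sqrt (‖x‖ ^ 2) := (Real.sqrt_sq (norm_nonneg x)).symm
    _ = Real.sqrt (‖y‖ ^ 2) := by rw [h4]
    _ = ‖y‖ := Real.sqrt_sq (norm_nonneg y)

/-- Key exact identity for hyperbolic isometries of the ball. -/
lemma key_id {Ainv : E3 → E3} (hAinv : IsHIsom Ainv) {x y : E3}
    (hx : x ∈ ball3) (hy : y ∈ ball3) :
    dist (Ainv x) (Ainv y) * Real.sqrt ((1 - ‖x‖ ^ 2) * (1 - ‖y‖ ^ 2)) =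
      dist x y * Real.sqrt ((1 - ‖Ainv x‖ ^ 2) * (1 - ‖Ainv y‖ ^ 2)) := by
  have h := hAinv.2 x hx y hy
  have hx' := hAinv.1.mapsTo hx
  have hy' := hAinv.1.mapsTo hy
  have sx := Real.sqrt_pos.mpr (mul_pos (ball3_pos hx) (ball3_pos hy))
  have sx' := Real.sqrt_pos.mpr (mul_pos (ball3_pos hx') (ball3_pos hy'))
  unfold hDist at h
  have h2 := Real.arsinh_injective (mul_left_cancel₀ (two_ne_zero (α := ℝ)) h)
  rwa [div_eq_div_iff sx'.ne' sx.ne'] at h2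

lemma key_id2 {Ainv : E3 → E3} (hAinv : IsHIsom Ainv) {x y : E3}
    (hx : x ∈ ball3) (hy : y ∈ ball3) :
    dist (Ainv x) (Ainv y) =
      dist x y * (Real.sqrt ((1 - ‖Ainv x‖ ^ 2) * (1 - ‖Ainv y‖ ^ 2)) /
        Real.sqrt ((1 - ‖x‖ ^ 2) * (1 - ‖y‖ ^ 2))) := by
  have sx := Real.sqrt_pos.mpr (mul_pos (ball3_pos hx) (ball3_pos hy))
  rw [← mul_div_assoc, eq_div_iff sx.ne']
  exact key_id hAinv hx hy

/-- The norm of the derivative of a hyperbolic isometry is the ratio of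
conformal factors. -/
lemma fderiv_norm_eq {Ainv : E3 → E3} (hAinv : IsHIsom Ainv) {x : E3}
    (hx : x ∈ ball3) (hdiff : DifferentiableAt ℝ Ainv x) :
    ‖fderiv ℝ Ainv x‖ = (1 - ‖Ainv x‖ ^ 2) / (1 - ‖x‖ ^ 2) := by
  set L : ℝ := (1 - ‖Ainv x‖ ^ 2) / (1 - ‖x‖ ^ 2) with hLdef
  have hAx : Ainv x ∈ ball3 := hAinv.1.mapsTo hx
  have hLpos : 0 < L := div_pos (ball3_pos hAx) (ball3_pos hx)
  set c : E3 → ℝ := fun y =>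
    Real.sqrt ((1 - ‖Ainv x‖ ^ 2) * (1 - ‖Ainv y‖ ^ 2)) /
      Real.sqrt ((1 - ‖x‖ ^ 2) * (1 - ‖y‖ ^ 2)) with hcdef
  have hcx : c x = L := by
    simp only [hcdef, hLdef]
    rw [Real.sqrt_mul_self (ball3_pos hAx).le, Real.sqrt_mul_self (ball3_pos hx).le]
  have hcont : ContinuousAt c x := by
    have h2 : ContinuousAt Ainv x := hdiff.continuousAt
    have hnum : ContinuousAt (fun y : E3 =>
        Real.sqrt ((1 - ‖Ainv x‖ ^ 2) * (1 - ‖Ainv y‖ ^ 2))) x :=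
      Real.continuous_sqrt.continuousAt.comp
        (continuousAt_const.mul (continuousAt_const.sub (h2.norm.pow 2)))
    have hden : ContinuousAt (fun y : E3 =>
        Real.sqrt ((1 - ‖x‖ ^ 2) * (1 - ‖y‖ ^ 2))) x :=
      Real.continuous_sqrt.continuousAt.comp
        (continuousAt_const.mul (continuousAt_const.sub
          (continuous_norm.continuousAt.pow 2)))
    exact hnum.div hden
      (ne_of_gt (Real.sqrt_pos.mpr (mul_pos (ball3_pos hx) (ball3_pos hx))))
  -- every directional derivative has norm L * ‖v‖
  have hval : ∀ v : E3, ‖fderiv ℝ Ainv x v‖ = ‖v‖ * L := by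
    intro v
    have hline : HasDerivAt (fun t : ℝ => x + t • v) v 0 := by
      simpa using ((hasDerivAt_id (0 : ℝ)).smul_const v).const_add x
    have hx0 : x + (0 : ℝ) • v = x := by simp
    have hF : HasFDerivAt Ainv (fderiv ℝ Ainv x) (x + (0 : ℝ) • v) := by
      rw [hx0]; exact hdiff.hasFDerivAt
    have hg : HasDerivAt (fun t : ℝ => Ainv (x + t • v)) (fderiv ℝ Ainv x v) 0 :=
      hF.comp_hasDerivAt 0 hline
    have hslope := hasDerivAt_iff_tendsto_slope.mp hg
    have hnorm_slope : Tendsto (fun t : ℝ => ‖slope (fun t : ℝ => Ainv (x + t • v)) 0 t‖)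
        (𝓝[≠] (0 : ℝ)) (𝓝 ‖fderiv ℝ Ainv x v‖) := hslope.norm
    have h1' : Tendsto (fun t : ℝ => x + t • v) (𝓝 0) (𝓝 x) := by
      have h1 : ContinuousAt (fun t : ℝ => x + t • v) 0 := by fun_prop
      have := h1.tendsto
      rwa [hx0] at this
    have hev : ∀ᶠ t : ℝ in 𝓝 0, x + t • v ∈ ball3 := h1' (isOpen_ball3.mem_nhds hx)
    have htarget : Tendsto (fun t : ℝ => ‖v‖ * c (x + t • v)) (𝓝[≠] (0 : ℝ))
        (𝓝 (‖v‖ * L)) := by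
      have hcomp : Tendsto (fun t : ℝ => c (x + t • v)) (𝓝[≠] (0 : ℝ)) (𝓝 (c x)) :=
        hcont.tendsto.comp (h1'.mono_left nhdsWithin_le_nhds)
      have := hcomp.const_mul ‖v‖
      simpa [hcx] using this
    have heq : ∀ᶠ t : ℝ in 𝓝[≠] (0 : ℝ),
        ‖slope (fun t : ℝ => Ainv (x + t • v)) 0 t‖ = ‖v‖ * c (x + t • v) := by
      filter_upwards [hev.filter_mono nhdsWithin_le_nhds, self_mem_nhdsWithin]
        with t hmem ht
      have ht' : t ≠ 0 := ht
      have hd : dist (Ainv x) (Ainv (x + t • v)) = dist x (x + t • v) * c (x + t • v) :=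
        key_id2 hAinv hx hmem
      have hdist : dist x (x + t • v) = |t| * ‖v‖ := by
        rw [dist_self_add_right, norm_smul, Real.norm_eq_abs]
      rw [slope_def_module]
      rw [norm_smul, sub_zero, norm_inv, Real.norm_eq_abs, hx0]
      rw [← dist_eq_norm', hd, hdist]
      have habs : |t| ≠ 0 := abs_ne_zero.mpr ht'
      field_simp
    have := hnorm_slope
    rw [tendsto_congr' heq] at this
    exact tendsto_nhds_unique this htarget
  refine le_antisymm (ContinuousLinearMap.opNorm_le_bound _ hLpos.le
    (fun v => by rw [hval v, mul_comm])) ?_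
  have hv0 : ‖(EuclideanSpace.single (0 : Fin 3) (1 : ℝ) : E3)‖ = 1 := by
    rw [EuclideanSpace.norm_single]; norm_num
  have := (fderiv ℝ Ainv x).le_opNorm (EuclideanSpace.single (0 : Fin 3) (1 : ℝ))
  rw [hval, hv0, one_mul, mul_one] at this
  exact this

/-- In the ball model, the hyperbolic perpendicular bisector of the
segment from the centre `O = 0` to `A·O` coincides with the isometric sphere of `A⁻¹`,
i.e. the locus where the Euclidean derivative of `A⁻¹` has norm one. -/
theorem stmt2 (A Ainv : E3 → E3)
    (hA : IsHIsom A) (hAinv : IsHIsom Ainv)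
    (hinv₁ : ∀ x ∈ ball3, Ainv (A x) = x) (hinv₂ : ∀ x ∈ ball3, A (Ainv x) = x)
    (hdiff : ∀ x ∈ ball3, DifferentiableAt ℝ Ainv x)
    (hne : A 0 ≠ 0) :
    {x ∈ ball3 | hDist x 0 = hDist x (A 0)} =
      {x ∈ ball3 | ‖fderiv ℝ Ainv x‖ = 1} := by
  have h0 : (0 : E3) ∈ ball3 := zero_mem_ball3
  have hA0 : A 0 ∈ ball3 := hA.1.mapsTo h0
  have main : ∀ x ∈ ball3, (hDist x 0 = hDist x (A 0) ↔ ‖fderiv ℝ Ainv x‖ = 1) := by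
    intro x hx
    have hAx : Ainv x ∈ ball3 := hAinv.1.mapsTo hx
    have step1 : hDist x (A 0) = hDist (Ainv x) 0 := by
      have h := hAinv.2 x hx (A 0) hA0
      rw [hinv₁ 0 h0] at h
      exact h.symm
    have hfd : ‖fderiv ℝ Ainv x‖ = (1 - ‖Ainv x‖ ^ 2) / (1 - ‖x‖ ^ 2) :=
      fderiv_norm_eq hAinv hx (hdiff x hx)
    rw [step1, hfd]
    constructor
    · intro h
      have hn : ‖x‖ = ‖Ainv x‖ := norm_eq_of_hDist_zero hx hAx h
      rw [div_eq_one_iff_eq (ball3_pos hx).ne', hn]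
    · intro h
      rw [div_eq_one_iff_eq (ball3_pos hx).ne'] at h
      have hn : ‖Ainv x‖ = ‖x‖ := by
        have h4 : ‖Ainv x‖ ^ 2 = ‖x‖ ^ 2 := by linarith
        calc ‖Ainv x‖ = Real.sqrt (‖Ainv x‖ ^ 2) := (Real.sqrt_sq (norm_nonneg _)).symm
          _ = Real.sqrt (‖x‖ ^ 2) := by rw [h4]
          _ = ‖x‖ := Real.sqrt_sq (norm_nonneg _)
      rw [hDist_zero_eq, hDist_zero_eq, hn]
  ext x
  simp only [Set.mem_setOf_eq]
  constructor
  · rintro ⟨hx, h⟩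
    exact ⟨hx, (main x hx).mp h⟩
  · rintro ⟨hx, h⟩
    exact ⟨hx, (main x hx).mpr h⟩

end
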